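/- Let V be a finite-dimensional real inner product space, W : Fin m → V a linearly independent family with Gram matrix M (entries M_{αβ} = ⟨W_α,W_β⟩, inverse entries m_{αβ}), and n ∈ V with n ∉ span{W_1,…,W_m}; set D := ⟨n,n⟩ − Σ_{α,β} m_{αβ}⟨n,W_α⟩⟨n,W_β⟩ (so D ≠ 0). For v ∈ V with ⟨W_α, v⟩ = 0 for all α, define ε := −2⟨n,v⟩/D, λ_k := (2⟨n,v⟩/D)·Σ_ℓ m_{kℓ}⟨n,W_ℓ⟩, and δ(v) := v + Σ_k λ_k W_k + ε·n. Then ⟨W_α, δ(v)⟩ = 0 for every α, i.e., the post-impact velocity again satisfies the nonholonomic constraints. -/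
import Mathlib


open scoped RealInnerProductSpace

/-- The nonholonomic impact map (Theorem 3.2 of the paper) maps velocities
satisfying the constraints to velocities satisfying the constraints. -/
theorem stmt2 {V : Type*} [NormedAddCommGroup V] [InnerProductSpace ℝ V]
    [FiniteDimensional ℝ V]
    {m : ℕ} (W : Fin m → V) (hW : LinearIndependent ℝ W)
    (M : Matrix (Fin m) (Fin m) ℝ) (hM : ∀ α β, M α β = ⟪W α, W β⟫)
    (n : V) (hn : n ∉ Submodule.span ℝ (Set.range W))
    (D : ℝ)
    (hD : D = ⟪n, n⟫ - ∑ α, ∑ β, M⁻¹ α β * (⟪n, W α⟫ * ⟪n, W β⟫))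
    (v : V) (hv : ∀ α, ⟪W α, v⟫ = 0)
    (ε : ℝ) (hε : ε = -2 * ⟪n, v⟫ / D)
    (lam : Fin m → ℝ)
    (hlam : ∀ k, lam k = (2 * ⟪n, v⟫ / D) * ∑ l, M⁻¹ k l * ⟪n, W l⟫)
    (δv : V) (hδ : δv = v + (∑ k, lam k • W k) + ε • n) :
    ∀ α, ⟪W α, δv⟫ = 0 := by
  -- M is invertible since it is the Gram matrix of a linearly independent family
  have hker : ∀ x : Fin m → ℝ, M.mulVec x = 0 → x = 0 := by
    intro x hx
    have hu : (∑ i, x i • W i) = 0 := by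
      have hself : ⟪∑ i, x i • W i, ∑ i, x i • W i⟫ = 0 := by
        rw [inner_sum]
        have : ∀ i, ⟪∑ j, x j • W j, x i • W i⟫ = x i * M.mulVec x i := by
          intro i
          rw [sum_inner, Matrix.mulVec]
          simp only [real_inner_smul_left, real_inner_smul_right, dotProduct]
          rw [Finset.mul_sum]
          apply Finset.sum_congr rfl
          intro j _
          rw [hM i j, real_inner_comm (W j) (W i)]
          ring
        simp [this, hx]
      exact inner_self_eq_zero.mp hself
    have := linearIndependent_iff'.mp hW Finset.univ x (by simpa using hu)
    funext i; exact this i (Finset.mem_univ i)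
  have hinj : Function.Injective M.mulVec := by
    intro x y hxy
    have : M.mulVec (x - y) = 0 := by
      rw [Matrix.mulVec_sub, hxy, sub_self]
    have := hker _ this
    exact sub_eq_zero.mp this
  have hU : IsUnit M := Matrix.mulVec_injective_iff_isUnit.mp hinj
  have hMinv : M * M⁻¹ = 1 :=
    Matrix.mul_nonsing_inv M ((Matrix.isUnit_iff_isUnit_det M).mp hU)
  have hentry : ∀ α l, ∑ k, M α k * M⁻¹ k l = if α = l then 1 else 0 := by
    intro α l
    have := congrArg (fun A => A α l) hMinv
    simpa [Matrix.mul_apply, Matrix.one_apply] using this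
  intro α
  rw [hδ, inner_add_right, inner_add_right, hv, inner_sum, real_inner_smul_right]
  simp only [real_inner_smul_right]
  have hsum : ∑ k, lam k * ⟪W α, W k⟫ = (2 * ⟪n, v⟫ / D) * ⟪n, W α⟫ := by
    have : ∀ k, lam k * ⟪W α, W k⟫
        = ∑ l, (2 * ⟪n, v⟫ / D) * (M α k * M⁻¹ k l * ⟪n, W l⟫) := by
      intro k
      rw [hlam k, ← hM α k, Finset.mul_sum, Finset.sum_mul]
      apply Finset.sum_congr rfl; intro l _; ring
    rw [Finset.sum_congr rfl fun k _ => this k, Finset.sum_comm]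
    have : ∀ l, ∑ k, (2 * ⟪n, v⟫ / D) * (M α k * M⁻¹ k l * ⟪n, W l⟫)
        = (2 * ⟪n, v⟫ / D) * ((∑ k, M α k * M⁻¹ k l) * ⟪n, W l⟫) := by
      intro l
      rw [Finset.sum_mul, Finset.mul_sum]
    rw [Finset.sum_congr rfl fun l _ => this l]
    simp only [hentry]
    rw [← Finset.mul_sum]
    congr 1
    rw [Finset.sum_eq_single α]
    · simp
    · intro b _ hb; simp [Ne.symm hb]
    · simp
  rw [hsum, hε, real_inner_comm (W α) n]
  ring
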